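/- arXiv:0706.3398 — 4 statements merged into one kernel-verified Lean document; each statement's English description precedes it below -/
import Mathlib

section
/- Let $p, r \ge 1$ and $q$ be integers, and let $A$ be the $(p+r)\times(p+r)$ integer matrix whose upper-left $(p+r-1)\times(p+r-1)$ block is the tridiagonal matrix with $-2$ on the diagonal and $1$ on the off-diagonals, whose last diagonal entry is $q$, whose $(p, p+r)$ and $(p+r, p)$ entries are $1$, and all other entries $0$. Then $\det A = (-1)^{p+r}(-q(p+r) - pr)$. -/
set_option maxHeartbeats 1000000

/-- The incidence matrix of the plumbing graph: a path of `p+r-1` vertices of weight `-2`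
(the upper-left tridiagonal block), together with one extra vertex of weight `q` (last index)
attached by an edge to the `p`-th vertex of the path. -/
def pretzelPlumbing (p r : ℕ) (q : ℤ) : Matrix (Fin (p + r)) (Fin (p + r)) ℤ :=
  Matrix.of fun i j =>
    if i = j then (if (i : ℕ) = p + r - 1 then q else -2)
    else if (i : ℕ) < p + r - 1 ∧ (j : ℕ) < p + r - 1 ∧ ((i : ℤ) - (j : ℤ)).natAbs = 1 then 1
    else if ((i : ℕ) = p - 1 ∧ (j : ℕ) = p + r - 1) ∨ ((i : ℕ) = p + r - 1 ∧ (j : ℕ) = p - 1)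
      then 1 else 0

def pzAux_aM (p r : ℕ) (q : ℤ) (i j : ℕ) : ℤ :=
  if i = j then (if i = p + r - 1 then q else -2)
  else if i < p + r - 1 ∧ j < p + r - 1 ∧ ((i : ℤ) - (j : ℤ)).natAbs = 1 then 1
  else if (i = p - 1 ∧ j = p + r - 1) ∨ (i = p + r - 1 ∧ j = p - 1) then 1 else 0

def pzAux_cFn (p r k : ℕ) : ℤ :=
  ((min (k + 1) p : ℕ) : ℤ) * ((p : ℤ) + (r : ℤ) - ((max (k + 1) p : ℕ) : ℤ))

def pzAux_lM (p r : ℕ) (i k : ℕ) : ℤ :=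
  if i < p + r - 1 then (if k ≤ i then (k : ℤ) + 1 else 0)
  else if k < p + r - 1 then pzAux_cFn p r k
  else if k = p + r - 1 then (p : ℤ) + (r : ℤ) else 0

def pzAux_uM (p r : ℕ) (q : ℤ) (i j : ℕ) : ℤ :=
  if i < p + r - 1 then
    (if j = i then -((i : ℤ) + 2)
     else if j = i + 1 ∧ j < p + r - 1 then (i : ℤ) + 1
     else if j = p + r - 1 ∧ p - 1 ≤ i then (p : ℤ)
     else 0)
  else if i = p + r - 1 ∧ j = p + r - 1 then (p : ℤ) * (r : ℤ) + ((p : ℤ) + (r : ℤ)) * q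
  else 0

def pzAux_vM (p r m j : ℕ) : ℤ :=
  if j = p + r - 1 then (if p - 1 < m then pzAux_cFn p r (p - 1) else 0)
  else if j + 1 < m then (if j = p - 1 then -((p : ℤ) + (r : ℤ)) else 0)
  else if j + 1 = m then -2 * pzAux_cFn p r j + (if 1 ≤ j then pzAux_cFn p r (j - 1) else 0)
  else if j = m ∧ 1 ≤ m then pzAux_cFn p r (j - 1)
  else 0

lemma pzAux_cval (p r : ℕ) (hp : 1 ≤ p) : pzAux_cFn p r (p - 1) = (p : ℤ) * (r : ℤ) := by
  obtain ⟨P, rfl⟩ : ∃ P, p = P + 1 := ⟨p - 1, by omega⟩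
  simp only [pzAux_cFn, Nat.add_sub_cancel, min_self, max_self]
  push_cast; ring

lemma pzAux_ctop (p r : ℕ) (hp : 1 ≤ p) (hr : 1 ≤ r) : pzAux_cFn p r (p + r - 1) = 0 := by
  simp only [pzAux_cFn, show p + r - 1 + 1 = p + r from by omega,
    Nat.min_eq_right (show p ≤ p + r by omega), Nat.max_eq_left (show p ≤ p + r by omega)]
  push_cast; ring

lemma pzAux_cstep (p r : ℕ) (hp : 1 ≤ p) (hr : 1 ≤ r) (j : ℕ) (h1 : 1 ≤ j)
    (hj : j + 1 ≤ p + r - 1) :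
    pzAux_cFn p r (j - 1) - 2 * pzAux_cFn p r j + pzAux_cFn p r (j + 1)
      = if j = p - 1 then -((p : ℤ) + (r : ℤ)) else 0 := by
  obtain ⟨J, rfl⟩ : ∃ J, j = J + 1 := ⟨j - 1, by omega⟩
  obtain ⟨P, rfl⟩ : ∃ P, p = P + 1 := ⟨p - 1, by omega⟩
  simp only [pzAux_cFn, Nat.add_sub_cancel, Nat.min_def, Nat.max_def]
  split_ifs <;> first
    | (exfalso; first | assumption | omega)
    | (push_cast; ring1)
    | (have h : J = P := (by omega); subst h; push_cast; ring1)
    | (have h : J + 1 = P := (by omega); subst h; push_cast; ring1)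
    | (have h : P = J + 1 := (by omega); subst h; push_cast; ring1)

lemma pzAux_cstep0 (p r : ℕ) (hp : 1 ≤ p) (hr : 1 ≤ r) (hj : 1 ≤ p + r - 1) :
    -2 * pzAux_cFn p r 0 + pzAux_cFn p r 1 = if 0 = p - 1 then -((p : ℤ) + (r : ℤ)) else 0 := by
  obtain ⟨P, rfl⟩ : ∃ P, p = P + 1 := ⟨p - 1, by omega⟩
  simp only [pzAux_cFn, Nat.add_sub_cancel, Nat.min_def, Nat.max_def]
  split_ifs <;> first
    | (exfalso; first | assumption | omega)
    | (push_cast; ring1)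
    | (have h : P = 0 := (by omega); subst h; push_cast; ring1)
    | (have h : P = 1 := (by omega); subst h; push_cast; ring1)

lemma pzAux_path_sum (p r : ℕ) (q : ℤ) (hp : 1 ≤ p) (hr : 1 ≤ r) :
    ∀ i, i < p + r - 1 → ∀ j, j < p + r →
      ∑ k ∈ Finset.range (i + 1), ((k : ℤ) + 1) * pzAux_aM p r q k j = pzAux_uM p r q i j := by
  intro i
  induction i with
  | zero =>
    intro hi j hj
    rw [Finset.sum_range_one]
    simp only [pzAux_aM, pzAux_uM]
    split_ifs <;> omega
  | succ i ih =>
    intro hi j hj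
    rw [Finset.sum_range_succ, ih (by omega) j hj]
    simp only [pzAux_aM, pzAux_uM]
    split_ifs <;> omega

lemma pzAux_row_sum_path (p r : ℕ) (q : ℤ) (hp : 1 ≤ p) (hr : 1 ≤ r)
    (i : ℕ) (hi : i < p + r - 1) (j : ℕ) (hj : j < p + r) :
    ∑ k ∈ Finset.range (p + r), pzAux_lM p r i k * pzAux_aM p r q k j = pzAux_uM p r q i j := by
  rw [← pzAux_path_sum p r q hp hr i hi j hj]
  rw [← Finset.sum_subset (Finset.range_subset_range.mpr (by omega : i + 1 ≤ p + r))
      (fun k _ hk => by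
        have : ¬ k ≤ i := by simp only [Finset.mem_range] at hk; omega
        simp [pzAux_lM, hi, this])]
  refine Finset.sum_congr rfl fun k hk => ?_
  have hk' : k ≤ i := by simp only [Finset.mem_range] at hk; omega
  simp [pzAux_lM, hi, hk']

lemma pzAux_lastpartial (p r : ℕ) (q : ℤ) (hp : 1 ≤ p) (hr : 1 ≤ r) :
    ∀ m, m ≤ p + r - 1 → ∀ j, j < p + r →
      ∑ k ∈ Finset.range m, pzAux_cFn p r k * pzAux_aM p r q k j = pzAux_vM p r m j := by
  intro m
  induction m with
  | zero =>
    intro _ j hj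
    rw [Finset.sum_range_zero]
    simp only [pzAux_vM]
    split_ifs <;> first | rfl | (exfalso; first | assumption | omega)
  | succ m ih =>
    intro hm j hj
    rw [Finset.sum_range_succ, ih (by omega) j hj]
    simp only [pzAux_vM, pzAux_aM]
    split_ifs <;> first
      | (push_cast; ring1)
      | (exfalso; first | assumption | omega)
      | (have h : j = m := (by omega); subst h; push_cast; ring1)
      | (have h : j = m + 1 := (by omega); subst h;
         simp only [Nat.add_sub_cancel]; push_cast; ring1)
      | (have h : m = p - 1 := (by omega); subst h; push_cast; ring1)
      | (have h : m = j + 1 := (by omega); subst h;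
         have hc := pzAux_cstep p r hp hr j (by omega) (by omega);
         split_ifs at hc <;> first | linarith | (exfalso; first | assumption | omega))
      | (have h0 : j = 0 := (by omega); subst h0;
         have h : m = 1 := (by omega); subst h;
         have hc := pzAux_cstep0 p r hp hr (by omega);
         split_ifs at hc <;> first | linarith | (exfalso; first | assumption | omega))

lemma pzAux_row_sum_last (p r : ℕ) (q : ℤ) (hp : 1 ≤ p) (hr : 1 ≤ r) (j : ℕ) (hj : j < p + r) :
    ∑ k ∈ Finset.range (p + r), pzAux_lM p r (p + r - 1) k * pzAux_aM p r q k j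
      = pzAux_uM p r q (p + r - 1) j := by
  rw [show Finset.range (p + r) = Finset.range ((p + r - 1) + 1) from by
    rw [Nat.sub_add_cancel (by omega)]]
  rw [Finset.sum_range_succ]
  rw [Finset.sum_congr rfl (fun k hk => by
    have hk' : k < p + r - 1 := Finset.mem_range.mp hk
    rw [show pzAux_lM p r (p + r - 1) k = pzAux_cFn p r k from by
      simp only [pzAux_lM]; rw [if_neg (by omega), if_pos hk']])]
  rw [pzAux_lastpartial p r q hp hr (p + r - 1) le_rfl j hj]
  rw [show pzAux_lM p r (p + r - 1) (p + r - 1) = (p : ℤ) + (r : ℤ) from by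
    simp only [pzAux_lM]; rw [if_neg (by omega), if_neg (by omega)]; simp]
  simp only [pzAux_vM, pzAux_aM, pzAux_uM, true_and, and_true]
  split_ifs <;> first
    | (push_cast; ring1)
    | (exfalso; first | assumption | omega)
    | (rw [pzAux_cval p r hp])
    | (rw [pzAux_cval p r hp]; push_cast; ring1)
    | (have he : pzAux_cFn p r (j + 1) = 0 := (by
         rw [show j + 1 = p + r - 1 from by omega]; exact pzAux_ctop p r hp hr);
       have hc := pzAux_cstep p r hp hr j (by omega) (by omega);
       split_ifs at hc <;> first | linarith | (exfalso; first | assumption | omega))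
    | (have h0 : j = 0 := (by omega); subst h0;
       have he : pzAux_cFn p r 1 = 0 := (by
         rw [show 1 = p + r - 1 from by omega]; exact pzAux_ctop p r hp hr);
       have hc := pzAux_cstep0 p r hp hr (by omega);
       split_ifs at hc <;> first | linarith | (exfalso; first | assumption | omega))

lemma pzAux_row_sum (p r : ℕ) (q : ℤ) (hp : 1 ≤ p) (hr : 1 ≤ r)
    (i j : ℕ) (hi : i < p + r) (hj : j < p + r) :
    ∑ k ∈ Finset.range (p + r), pzAux_lM p r i k * pzAux_aM p r q k j = pzAux_uM p r q i j := by
  rcases lt_or_ge i (p + r - 1) with h | h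
  · exact pzAux_row_sum_path p r q hp hr i h j hj
  · rw [show i = p + r - 1 from by omega]
    exact pzAux_row_sum_last p r q hp hr j hj

lemma pzAux_fact_prod1 : ∀ m : ℕ, ∏ k ∈ Finset.range m, ((k : ℤ) + 1) = (m.factorial : ℤ) := by
  intro m
  induction m with
  | zero => simp
  | succ m ih => rw [Finset.prod_range_succ, ih, Nat.factorial_succ]; push_cast; ring

lemma pzAux_fact_prod2 : ∀ m : ℕ, ∏ k ∈ Finset.range m, (-((k : ℤ) + 2))
    = (-1) ^ m * ((m + 1).factorial : ℤ) := by
  intro m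
  induction m with
  | zero => simp
  | succ m ih =>
    rw [Finset.prod_range_succ, ih,
      show (m + 1 + 1).factorial = (m + 1 + 1) * (m + 1).factorial from rfl]
    push_cast; ring

theorem det_pretzelPlumbing (p r : ℕ) (q : ℤ) (hp : 1 ≤ p) (hr : 1 ≤ r) :
    (pretzelPlumbing p r q).det = (-1) ^ (p + r) * (-q * (p + r) - p * r) := by
  obtain ⟨m, hm⟩ : ∃ m, p + r = m + 1 := ⟨p + r - 1, by omega⟩
  have hA : pretzelPlumbing p r q
      = Matrix.of (fun i j : Fin (p + r) => pzAux_aM p r q i.val j.val) := by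
    ext i j
    simp only [pretzelPlumbing, pzAux_aM, Matrix.of_apply, Fin.val_eq_val]
  have hmul : (Matrix.of fun i j : Fin (p + r) => pzAux_lM p r i.val j.val) * pretzelPlumbing p r q
      = Matrix.of (fun i j : Fin (p + r) => pzAux_uM p r q i.val j.val) := by
    rw [hA]
    ext i j
    rw [Matrix.mul_apply]
    simp only [Matrix.of_apply]
    rw [Fin.sum_univ_eq_sum_range (fun k => pzAux_lM p r i.val k * pzAux_aM p r q k j.val) (p + r)]
    exact pzAux_row_sum p r q hp hr i.val j.val i.isLt j.isLt
  have hLtri : (Matrix.of fun i j : Fin (p + r) => pzAux_lM p r i.val j.val).BlockTriangular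
      OrderDual.toDual := by
    intro i j hij
    have h' : (i : ℕ) < (j : ℕ) := hij
    simp only [Matrix.of_apply, pzAux_lM]
    split_ifs <;> first | rfl | omega
  have hUtri : (Matrix.of fun i j : Fin (p + r) => pzAux_uM p r q i.val j.val).BlockTriangular
      id := by
    intro i j hij
    have h' : (j : ℕ) < (i : ℕ) := hij
    simp only [Matrix.of_apply, pzAux_uM]
    split_ifs <;> first | rfl | omega | (exfalso; omega)
  have hdetL : (Matrix.of fun i j : Fin (p + r) => pzAux_lM p r i.val j.val).det
      = ((p + r).factorial : ℤ) := by
    rw [Matrix.det_of_lowerTriangular _ hLtri]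
    simp only [Matrix.of_apply]
    rw [Fin.prod_univ_eq_prod_range (fun k => pzAux_lM p r k k) (p + r)]
    rw [hm, Finset.prod_range_succ]
    rw [Finset.prod_congr rfl (fun k hk => by
      have hk' : k < m := Finset.mem_range.mp hk
      show pzAux_lM p r k k = (k : ℤ) + 1
      simp only [pzAux_lM]; rw [if_pos (by omega), if_pos le_rfl])]
    rw [pzAux_fact_prod1 m]
    rw [show pzAux_lM p r m m = (p : ℤ) + (r : ℤ) from by
      simp only [pzAux_lM]; rw [if_neg (by omega), if_neg (by omega), if_pos (by omega)]]
    rw [show (m + 1).factorial = (m + 1) * m.factorial from rfl]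
    have hpr : ((p : ℤ) + r) = ((m : ℤ) + 1) := by push_cast; omega
    rw [hpr]; push_cast; ring
  have hdetU : (Matrix.of fun i j : Fin (p + r) => pzAux_uM p r q i.val j.val).det
      = (-1) ^ m * ((p + r).factorial : ℤ)
        * ((p : ℤ) * (r : ℤ) + ((p : ℤ) + (r : ℤ)) * q) := by
    rw [Matrix.det_of_upperTriangular hUtri]
    simp only [Matrix.of_apply]
    rw [Fin.prod_univ_eq_prod_range (fun k => pzAux_uM p r q k k) (p + r)]
    rw [hm, Finset.prod_range_succ]
    rw [Finset.prod_congr rfl (fun k hk => by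
      have hk' : k < m := Finset.mem_range.mp hk
      show pzAux_uM p r q k k = -((k : ℤ) + 2)
      simp only [pzAux_uM]; rw [if_pos (by omega)]; simp)]
    rw [pzAux_fact_prod2 m]
    rw [show pzAux_uM p r q m m = (p : ℤ) * (r : ℤ) + ((p : ℤ) + (r : ℤ)) * q from by
      simp only [pzAux_uM]; rw [if_neg (by omega), if_pos (by constructor <;> omega)]]
    try rw [hm]
    try ring
  have h1 := congrArg Matrix.det hmul
  rw [Matrix.det_mul, hdetL, hdetU, hA] at h1
  have hf : ((p + r).factorial : ℤ) ≠ 0 := by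
    exact_mod_cast Nat.factorial_ne_zero (p + r)
  have hdet : (Matrix.of (fun i j : Fin (p + r) => pzAux_aM p r q i.val j.val)).det
      = (-1) ^ m * ((p : ℤ) * r + ((p : ℤ) + r) * q) := by
    apply mul_left_cancel₀ hf
    rw [h1]; ring
  rw [hA, hdet, hm, pow_succ]
  ring
end

section
/- Let $p, r \ge 1$ and $q \le -1$ be integers, and let $A$ be the symmetric $(p+r)\times(p+r)$ integer matrix whose upper-left $(p+r-1)\times(p+r-1)$ block is the tridiagonal matrix with $-2$ on the diagonal and $1$ on the off-diagonals, whose $(p+r,p+r)$ entry is $q$, whose $(p, p+r)$ and $(p+r, p)$ entries are $1$, and all other entries $0$. Then $A$ is negative definite if and only if $1/p + 1/q + 1/r > 0$. -/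
open Finset

/-- ℕ-indexed version of the matrix entries. -/
def pretzelAuxA (p r : ℕ) (q : ℤ) (i j : ℕ) : ℝ :=
  if i = j then (if i = p + r - 1 then (q:ℝ) else -2)
  else if i < p + r - 1 ∧ j < p + r - 1 ∧ ((i : ℤ) - (j : ℤ)).natAbs = 1 then 1
  else if (i = p - 1 ∧ j = p + r - 1) ∨ (i = p + r - 1 ∧ j = p - 1) then 1 else 0

lemma pretzel_sum_single_ite (n c : ℕ) (hc : c < n) (f : ℕ → ℝ) :
    ∑ i ∈ range n, (if i = c then f i else 0) = f c := by
  rw [Finset.sum_ite_eq' (range n) c f, if_pos (mem_range.mpr hc)]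

lemma pretzel_double_sum_step (n : ℕ) (f : ℕ → ℕ → ℝ) :
    ∑ i ∈ range (n+1), ∑ j ∈ range (n+1), f i j
      = (∑ i ∈ range n, ∑ j ∈ range n, f i j) + (∑ j ∈ range n, f n j)
        + (∑ i ∈ range n, f i n) + f n n := by
  simp only [Finset.sum_range_succ, Finset.sum_add_distrib]
  ring

lemma pretzel_neighbor_sum (y : ℕ → ℝ) (m : ℕ) :
    ∑ i ∈ range m, ∑ j ∈ range m,
      (if ((i:ℤ) - (j:ℤ)).natAbs = 1 then y i * y j else 0)
    = 2 * ∑ i ∈ range (m-1), y i * y (i+1) := by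
  induction m with
  | zero => simp
  | succ m ih =>
    rcases Nat.eq_zero_or_pos m with hm | hm
    · subst hm; simp
    · rw [pretzel_double_sum_step, ih]
      obtain ⟨k, rfl⟩ : ∃ k, m = k + 1 := ⟨m - 1, by omega⟩
      have hcol : ∑ i ∈ range (k+1),
          (if ((i:ℤ) - ((k:ℤ)+1)).natAbs = 1 then y i * y (k+1) else 0) = y k * y (k+1) := by
        rw [Finset.sum_eq_single_of_mem k (by simp)]
        · rw [if_pos (by omega)]
        · intro b hb hbk
          rw [if_neg]
          simp only [mem_range] at hb
          omega
      have hrow : ∑ j ∈ range (k+1),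
          (if (((k:ℤ)+1) - (j:ℤ)).natAbs = 1 then y (k+1) * y j else 0) = y (k+1) * y k := by
        rw [Finset.sum_eq_single_of_mem k (by simp)]
        · rw [if_pos (by omega)]
        · intro b hb hbk
          rw [if_neg]
          simp only [mem_range] at hb
          omega
      push_cast at hcol hrow ⊢
      rw [hcol, hrow, if_neg (by omega)]
      simp only [Nat.add_sub_cancel, sum_range_succ] at *
      ring

lemma pretzel_sos_eq (y v : ℕ → ℝ) (m : ℕ) (hm : 1 ≤ m)
    (hv : ∀ i, v i = if 1 ≤ i ∧ i ≤ m then y (i-1) else 0) :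
    ∑ i ∈ range (m+1), (v (i+1) - v i)^2
      = 2 * ∑ i ∈ range m, y i ^ 2 - 2 * ∑ i ∈ range (m-1), y i * y (i+1) := by
  have hv0 : v 0 = 0 := by rw [hv]; simp
  have hvm : v (m+1) = 0 := by rw [hv, if_neg (by omega)]
  have hvy : ∀ i, i < m → v (i+1) = y i := by
    intro i hi; rw [hv, if_pos (by omega)]; simp
  have e0 : ∑ i ∈ range (m+1), (v (i+1) - v i)^2
      = ∑ i ∈ range (m+1), ((v (i+1))^2 + (v i)^2 - 2*(v i * v (i+1))) := by
    apply Finset.sum_congr rfl; intro i _; ring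
  have e1 : ∑ i ∈ range (m+1), (v (i+1))^2 = ∑ i ∈ range m, y i ^ 2 := by
    rw [Finset.sum_range_succ, hvm]
    simp only [ne_eq, OfNat.ofNat_ne_zero, not_false_eq_true, zero_pow, add_zero]
    apply Finset.sum_congr rfl; intro i hi
    rw [hvy i (mem_range.mp hi)]
  have e2 : ∑ i ∈ range (m+1), (v i)^2 = ∑ i ∈ range m, y i ^ 2 := by
    rw [Finset.sum_range_succ', hv0]
    simp only [ne_eq, OfNat.ofNat_ne_zero, not_false_eq_true, zero_pow, add_zero]
    apply Finset.sum_congr rfl; intro i hi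
    rw [hvy i (mem_range.mp hi)]
  have e3 : ∑ i ∈ range (m+1), v i * v (i+1) = ∑ i ∈ range (m-1), y i * y (i+1) := by
    rw [Finset.sum_range_succ', hv0]
    obtain ⟨k, rfl⟩ : ∃ k, m = k + 1 := ⟨m - 1, by omega⟩
    rw [Finset.sum_range_succ, hvm]
    simp only [Nat.add_sub_cancel, mul_zero, zero_mul, add_zero]
    apply Finset.sum_congr rfl; intro i hi
    simp only [mem_range] at hi
    rw [hvy i (by omega), hvy (i+1) (by omega)]
  rw [e0, Finset.sum_sub_distrib, Finset.sum_add_distrib, e1, e2, ← Finset.mul_sum, e3]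
  ring

open Matrix in
lemma pretzel_quadform (p r : ℕ) (q : ℤ) (hp : 1 ≤ p) (hr : 1 ≤ r) (x : Fin (p+r) → ℝ)
    (y : ℕ → ℝ) (hy : ∀ i : Fin (p+r), y ↑i = x i) :
    x ⬝ᵥ ((pretzelPlumbing p r q).map (Int.cast : ℤ → ℝ)).mulVec x
      = (q:ℝ) * (y (p+r-1) * y (p+r-1)) + 2 * (y (p-1) * y (p+r-1))
        - 2 * ∑ i ∈ range (p+r-1), y i ^ 2
        + 2 * ∑ i ∈ range (p+r-1-1), y i * y (i+1) := by
  have hM : ∀ i j : Fin (p+r),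
      ((pretzelPlumbing p r q).map (Int.cast : ℤ → ℝ)) i j = pretzelAuxA p r q ↑i ↑j := by
    intro i j
    simp only [Matrix.map_apply, pretzelPlumbing, Matrix.of_apply, pretzelAuxA]
    by_cases h1 : i = j
    · subst h1
      rw [if_pos rfl, if_pos rfl]
      split_ifs <;> simp
    · rw [if_neg h1, if_neg (fun h => h1 (Fin.ext h))]
      split_ifs <;> simp
  have step1 : x ⬝ᵥ ((pretzelPlumbing p r q).map (Int.cast : ℤ → ℝ)).mulVec x
      = ∑ i ∈ range (p+r), ∑ j ∈ range (p+r), y i * (pretzelAuxA p r q i j * y j) := by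
    have e : x ⬝ᵥ ((pretzelPlumbing p r q).map (Int.cast : ℤ → ℝ)).mulVec x
        = ∑ i : Fin (p+r), ∑ j : Fin (p+r), y ↑i * (pretzelAuxA p r q ↑i ↑j * y ↑j) := by
      simp only [dotProduct, Matrix.mulVec]
      apply Finset.sum_congr rfl
      intro i _
      rw [Finset.mul_sum]
      apply Finset.sum_congr rfl
      intro j _
      rw [hy i, hy j, hM i j]
    rw [e, ← Fin.sum_univ_eq_sum_range
      (fun i => ∑ j ∈ range (p+r), y i * (pretzelAuxA p r q i j * y j))]
    apply Finset.sum_congr rfl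
    intro i _
    rw [← Fin.sum_univ_eq_sum_range (fun j => y ↑i * (pretzelAuxA p r q ↑i j * y j))]
  rw [step1]
  obtain ⟨m, hm⟩ : ∃ m, p + r = m + 1 := ⟨p+r-1, by omega⟩
  have hpm : p - 1 < m := by omega
  have hm1 : 1 ≤ m := by omega
  rw [hm]
  simp only [Nat.add_sub_cancel]
  have hsplit : ∀ i j : ℕ, y i * (pretzelAuxA p r q i j * y j)
      = (if i = j then (if i = m then (q:ℝ) else -2) * (y i * y j) else 0)
        + (if i < m ∧ j < m ∧ ((i:ℤ)-(j:ℤ)).natAbs = 1 then y i * y j else 0)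
        + ((if i = p-1 ∧ j = m then y i * y j else 0)
          + (if i = m ∧ j = p-1 then y i * y j else 0)) := by
    intro i j
    unfold pretzelAuxA
    rw [hm]
    simp only [Nat.add_sub_cancel]
    split_ifs <;> first | ring1 | (exfalso; omega)
  simp only [hsplit, Finset.sum_add_distrib]
  have hS1 : ∑ i ∈ range (m+1), ∑ j ∈ range (m+1),
      (if i = j then (if i = m then (q:ℝ) else -2) * (y i * y j) else 0)
      = (q:ℝ) * (y m * y m) - 2 * ∑ i ∈ range m, y i ^ 2 := by
    have inner : ∀ i ∈ range (m+1), ∑ j ∈ range (m+1),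
        (if i = j then (if i = m then (q:ℝ) else -2) * (y i * y j) else 0)
        = (if i = m then (q:ℝ) else -2) * (y i * y i) := by
      intro i hi
      rw [Finset.sum_ite_eq (range (m+1)) i (fun j => (if i = m then (q:ℝ) else -2) * (y i * y j)),
        if_pos hi]
    rw [Finset.sum_congr rfl inner, Finset.sum_range_succ, if_pos rfl]
    have : ∀ i ∈ range m, (if i = m then (q:ℝ) else -2) * (y i * y i) = -2 * y i ^ 2 := by
      intro i hi
      simp only [mem_range] at hi
      rw [if_neg (show ¬ i = m by omega)]
      ring
    rw [Finset.sum_congr rfl this, ← Finset.mul_sum]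
    ring
  have hS2 : ∑ i ∈ range (m+1), ∑ j ∈ range (m+1),
      (if i < m ∧ j < m ∧ ((i:ℤ)-(j:ℤ)).natAbs = 1 then y i * y j else 0)
      = 2 * ∑ i ∈ range (m-1), y i * y (i+1) := by
    rw [pretzel_double_sum_step]
    have h1 : ∑ j ∈ range m,
        (if m < m ∧ j < m ∧ ((m:ℤ)-(j:ℤ)).natAbs = 1 then y m * y j else 0) = 0 :=
      Finset.sum_eq_zero fun j _ => if_neg (by omega)
    have h2 : ∑ i ∈ range m,
        (if i < m ∧ m < m ∧ ((i:ℤ)-(m:ℤ)).natAbs = 1 then y i * y m else 0) = 0 :=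
      Finset.sum_eq_zero fun i _ => if_neg (by omega)
    have h3 : (if m < m ∧ m < m ∧ ((m:ℤ)-(m:ℤ)).natAbs = 1 then y m * y m else 0) = 0 :=
      if_neg (by omega)
    rw [h1, h2, h3]
    have : ∀ i ∈ range m, ∑ j ∈ range m,
        (if i < m ∧ j < m ∧ ((i:ℤ)-(j:ℤ)).natAbs = 1 then y i * y j else 0)
        = ∑ j ∈ range m, (if ((i:ℤ)-(j:ℤ)).natAbs = 1 then y i * y j else 0) := by
      intro i hi
      apply Finset.sum_congr rfl
      intro j hj
      simp only [mem_range] at hi hj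
      simp [hi, hj]
    rw [Finset.sum_congr rfl this, pretzel_neighbor_sum]
    ring
  have hS3a : ∑ i ∈ range (m+1), ∑ j ∈ range (m+1),
      (if i = p-1 ∧ j = m then y i * y j else 0) = y (p-1) * y m := by
    have pt : ∀ i j : ℕ, (if i = p-1 ∧ j = m then y i * y j else 0)
        = if j = m then (if i = p-1 then y i * y j else 0) else 0 := by
      intro i j
      split_ifs <;> first | rfl | (exfalso; tauto)
    simp only [pt]
    rw [Finset.sum_congr rfl (fun i _ =>
      pretzel_sum_single_ite (m+1) m (by omega) (fun j => if i = p-1 then y i * y j else 0))]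
    exact pretzel_sum_single_ite (m+1) (p-1) (by omega) (fun i => y i * y m)
  have hS3b : ∑ i ∈ range (m+1), ∑ j ∈ range (m+1),
      (if i = m ∧ j = p-1 then y i * y j else 0) = y m * y (p-1) := by
    have pt : ∀ i j : ℕ, (if i = m ∧ j = p-1 then y i * y j else 0)
        = if j = p-1 then (if i = m then y i * y j else 0) else 0 := by
      intro i j
      split_ifs <;> first | rfl | (exfalso; tauto)
    simp only [pt]
    rw [Finset.sum_congr rfl (fun i _ =>
      pretzel_sum_single_ite (m+1) (p-1) (by omega) (fun j => if i = m then y i * y j else 0))]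
    exact pretzel_sum_single_ite (m+1) m (by omega) (fun i => y i * y (p-1))
  rw [hS1, hS2, hS3a, hS3b]
  ring

lemma pretzel_cond_iff (p r : ℕ) (q : ℤ) (hp : 1 ≤ p) (hr : 1 ≤ r) (hq : q ≤ -1) :
    ((1:ℚ) / p + 1 / q + 1 / r > 0) ↔ (p:ℤ)*r + q*(p+r) < 0 := by
  have hp0 : (0:ℚ) < p := by exact_mod_cast hp
  have hr0 : (0:ℚ) < r := by exact_mod_cast hr
  have hq1 : (q:ℚ) ≤ -1 := by exact_mod_cast hq
  have hq0 : (q:ℚ) < 0 := by linarith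
  have hpne : (p:ℚ) ≠ 0 := ne_of_gt hp0
  have hrne : (r:ℚ) ≠ 0 := ne_of_gt hr0
  have hqne : (q:ℚ) ≠ 0 := ne_of_lt hq0
  have key : (1:ℚ)/p + 1/q + 1/r = ((p*r + q*(p+r) : ℤ) : ℚ)/((p*q*r : ℤ):ℚ) := by
    push_cast
    field_simp
    ring
  have hd : ((p*q*r:ℤ):ℚ) < 0 := by
    push_cast
    have h1 : (0:ℚ) < (p:ℚ)*(r:ℚ) := mul_pos hp0 hr0
    nlinarith
  rw [gt_iff_lt, key, div_pos_iff]
  constructor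
  · rintro (⟨hn, hdpos⟩ | ⟨hn, _⟩)
    · linarith
    · exact_mod_cast hn
  · intro h
    exact Or.inr ⟨by exact_mod_cast h, hd⟩

open Matrix in
theorem pretzelPlumbing_negDef_iff (p r : ℕ) (q : ℤ) (hp : 1 ≤ p) (hr : 1 ≤ r) (hq : q ≤ -1) :
    (∀ x : Fin (p + r) → ℝ, x ≠ 0 →
        x ⬝ᵥ ((pretzelPlumbing p r q).map (Int.cast : ℤ → ℝ)).mulVec x < 0) ↔
      (1 : ℚ) / p + 1 / q + 1 / r > 0 := by
  have hcond := pretzel_cond_iff p r q hp hr hq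
  have hp1 : (1:ℝ) ≤ p := by exact_mod_cast hp
  have hr1 : (1:ℝ) ≤ r := by exact_mod_cast hr
  have hq1 : (q:ℝ) ≤ -1 := by exact_mod_cast hq
  constructor
  · -- negative definite → condition
    intro hneg
    by_contra hc
    have hge : 0 ≤ (p:ℤ)*r + q*(p+r) := by
      by_contra h
      exact hc (hcond.mpr (by omega))
    set w : ℕ → ℝ := fun i => if i = p+r-1 then ((p:ℝ)*r)
      else (-(q:ℝ)) * (if i + 1 ≤ p then ((i:ℝ)+1)*(r:ℝ) else (p:ℝ)*(((p+r-1-i : ℕ)):ℝ))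
      with hw
    set x : Fin (p+r) → ℝ := fun i => w ↑i with hxdef
    have hx0 : x ≠ 0 := by
      intro h
      have hmlt : p + r - 1 < p + r := by omega
      have h1 := congrFun h ⟨p+r-1, hmlt⟩
      have h2 : x ⟨p+r-1, hmlt⟩ = (p:ℝ)*r := by
        show w (p+r-1) = _
        rw [hw]
        simp
      rw [h1] at h2
      simp only [Pi.zero_apply] at h2
      nlinarith
    have hQ := pretzel_quadform p r q hp hr x w (fun i => rfl)
    set v : ℕ → ℝ := fun i => if 1 ≤ i ∧ i ≤ p+r-1 then w (i-1) else 0 with hv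
    have hsos := pretzel_sos_eq w v (p+r-1) (by omega) (fun i => rfl)
    rw [show p+r-1+1 = p+r from by omega] at hsos
    have hQ2 : x ⬝ᵥ ((pretzelPlumbing p r q).map (Int.cast : ℤ → ℝ)).mulVec x
        = (q:ℝ) * (w (p+r-1) * w (p+r-1)) + 2 * (w (p-1) * w (p+r-1))
          - ∑ i ∈ range (p+r), (v (i+1) - v i)^2 := by
      rw [hQ, hsos]; ring
    -- compute the pieces
    have hwm : w (p+r-1) = (p:ℝ)*r := by rw [hw]; simp
    have hwp : w (p-1) = -(q:ℝ)*((p:ℝ)*(r:ℝ)) := by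
      rw [hw]
      simp only
      rw [if_neg (by omega), if_pos (by omega)]
      have : (((p-1 : ℕ)):ℝ) = (p:ℝ) - 1 := by
        push_cast [Nat.cast_sub hp]
        ring
      rw [this]
      ring
    have hstep1 : ∀ i ∈ range p, (v (i+1) - v i)^2 = ((q:ℝ)*(r:ℝ))^2 := by
      intro i hi
      simp only [mem_range] at hi
      have e1 : v (i+1) = -(q:ℝ) * (((i:ℝ)+1)*(r:ℝ)) := by
        rw [hv]
        simp only [Nat.add_sub_cancel]
        rw [if_pos (by omega), hw]
        simp only
        rw [if_neg (by omega), if_pos (by omega)]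
      have e2 : v i = -(q:ℝ) * ((i:ℝ)*(r:ℝ)) := by
        rcases Nat.eq_zero_or_pos i with h0 | h0
        · subst h0
          rw [hv]
          simp only
          rw [if_neg (by omega)]
          norm_num
        · rw [hv]
          simp only
          rw [if_pos (by omega), hw]
          simp only
          rw [if_neg (by omega), if_pos (by omega)]
          have : (((i-1 : ℕ)):ℝ) = (i:ℝ) - 1 := by
            push_cast [Nat.cast_sub h0]
            ring
          rw [this]
          ring
      rw [e1, e2]
      ring
    have hstep2 : ∀ i ∈ range r, (v (p+i+1) - v (p+i))^2 = ((q:ℝ)*(p:ℝ))^2 := by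
      intro i hi
      simp only [mem_range] at hi
      have e1 : v (p+i+1) = -(q:ℝ) * ((p:ℝ)*((r:ℝ)-1-(i:ℝ))) := by
        rcases Nat.lt_or_ge i (r-1) with h0 | h0
        · rw [hv]
          simp only [Nat.add_sub_cancel]
          rw [if_pos (by omega), hw]
          simp only
          rw [if_neg (by omega), if_neg (by omega)]
          have : (((p+r-1-(p+i) : ℕ)):ℝ) = (r:ℝ) - 1 - (i:ℝ) := by
            have hle : p + i ≤ p + r - 1 := by omega
            push_cast [Nat.cast_sub hle]
            push_cast [Nat.cast_sub (show 1 ≤ p + r by omega)]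
            ring
          rw [this]
        · have hir : i = r - 1 := by omega
          rw [hv]
          simp only
          rw [if_neg (by omega)]
          have : (r:ℝ) - 1 - (i:ℝ) = 0 := by
            rw [hir]
            push_cast [Nat.cast_sub hr]
            ring
          rw [this]
          ring
      have e2 : v (p+i) = -(q:ℝ) * ((p:ℝ)*((r:ℝ)-(i:ℝ))) := by
        rw [hv]
        simp only
        rw [if_pos (by omega), hw]
        simp only
        rcases Nat.eq_zero_or_pos i with h0 | h0
        · subst h0
          rw [if_neg (by omega), if_pos (by omega)]
          have : (((p+0-1 : ℕ)):ℝ) = (p:ℝ) - 1 := by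
            push_cast [Nat.cast_sub (show 1 ≤ p + 0 by omega)]
            ring
          rw [this]
          push_cast
          ring
        · rw [if_neg (by omega), if_neg (by omega)]
          have : (((p+r-1-(p+i-1) : ℕ)):ℝ) = (r:ℝ) - (i:ℝ) := by
            have hle : p + i - 1 ≤ p + r - 1 := by omega
            push_cast [Nat.cast_sub hle]
            push_cast [Nat.cast_sub (show 1 ≤ p + i by omega)]
            push_cast [Nat.cast_sub (show 1 ≤ p + r by omega)]
            ring
          rw [this]
      rw [e1, e2]
      ring
    have hSval : ∑ i ∈ range (p+r), (v (i+1) - v i)^2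
        = (p:ℝ) * ((q:ℝ)*(r:ℝ))^2 + (r:ℝ) * ((q:ℝ)*(p:ℝ))^2 := by
      rw [Finset.sum_range_add (fun i => (v (i+1) - v i)^2) p r]
      rw [Finset.sum_congr rfl hstep1, Finset.sum_congr rfl hstep2]
      simp [Finset.sum_const, card_range, nsmul_eq_mul]
    have hgeR : (0:ℝ) ≤ (p:ℝ)*(r:ℝ) + (q:ℝ)*((p:ℝ)+(r:ℝ)) := by exact_mod_cast hge
    have hQval : x ⬝ᵥ ((pretzelPlumbing p r q).map (Int.cast : ℤ → ℝ)).mulVec x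
        = (-(q:ℝ)) * ((p:ℝ)*(r:ℝ)) * ((p:ℝ)*(r:ℝ) + (q:ℝ)*((p:ℝ)+(r:ℝ))) := by
      rw [hQ2, hSval, hwm, hwp]
      ring
    have : (0:ℝ) ≤ x ⬝ᵥ ((pretzelPlumbing p r q).map (Int.cast : ℤ → ℝ)).mulVec x := by
      rw [hQval]
      have h1 : (0:ℝ) ≤ -(q:ℝ) := by linarith
      have h2 : (0:ℝ) ≤ (p:ℝ)*(r:ℝ) := by nlinarith
      exact mul_nonneg (mul_nonneg h1 h2) hgeR
    linarith [hneg x hx0]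
  · -- condition → negative definite
    intro hcpos x hx
    have hlt : (p:ℤ)*r + q*(p+r) < 0 := hcond.mp hcpos
    have hqR : (q:ℝ) < 0 := by linarith
    have hqne : (q:ℝ) ≠ 0 := by linarith
    have hp0 : (0:ℝ) < p := by linarith
    have hr0 : (0:ℝ) < r := by linarith
    set y : ℕ → ℝ := fun i => if h : i < p + r then x ⟨i, h⟩ else 0 with hy
    have hyx : ∀ i : Fin (p+r), y ↑i = x i := by
      intro i
      rw [hy]
      simp only [i.isLt, dif_pos]
    have hQ := pretzel_quadform p r q hp hr x y hyx
    set v : ℕ → ℝ := fun i => if 1 ≤ i ∧ i ≤ p+r-1 then y (i-1) else 0 with hv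
    have hsos := pretzel_sos_eq y v (p+r-1) (by omega) (fun i => rfl)
    rw [show p+r-1+1 = p+r from by omega] at hsos
    set S := ∑ i ∈ range (p+r), (v (i+1) - v i)^2 with hS
    have hQ2 : x ⬝ᵥ ((pretzelPlumbing p r q).map (Int.cast : ℤ → ℝ)).mulVec x
        = (q:ℝ) * (y (p+r-1) * y (p+r-1)) + 2 * (y (p-1) * y (p+r-1)) - S := by
      rw [hQ, hsos]; ring
    rw [hQ2]
    set Y := y (p-1) with hY
    set T := y (p+r-1) with hT
    clear_value y v S Y T
    have hv0 : v 0 = 0 := by simp only [hv]; rw [if_neg (by omega)]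
    have hvpr : v (p+r) = 0 := by simp only [hv]; rw [if_neg (by omega)]
    have hvp : v p = Y := by
      simp only [hv]
      rw [if_pos (by omega)]
      exact hY.symm
    have hSsplit : S = (∑ i ∈ range p, (v (i+1) - v i)^2)
        + ∑ i ∈ range r, (v (p+i+1) - v (p+i))^2 := by
      rw [hS, Finset.sum_range_add (fun i => (v (i+1) - v i)^2) p r]
    have htel1 : ∑ i ∈ range p, (v (i+1) - v i) = Y := by
      rw [Finset.sum_range_sub v p, hv0, hvp, sub_zero]
    have htel2 : ∑ i ∈ range r, (v (p+i+1) - v (p+i)) = -Y := by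
      have h := Finset.sum_range_sub (fun i => v (p+i)) r
      simp only [← add_assoc, Nat.add_zero] at h
      rw [h, hvpr, hvp]
      ring
    have hcs1 : Y^2 ≤ (p:ℝ) * ∑ i ∈ range p, (v (i+1) - v i)^2 := by
      have h := sq_sum_le_card_mul_sum_sq (s := range p) (f := fun i => v (i+1) - v i)
      rw [htel1, card_range] at h
      exact_mod_cast h
    have hcs2 : Y^2 ≤ (r:ℝ) * ∑ i ∈ range r, (v (p+i+1) - v (p+i))^2 := by
      have h := sq_sum_le_card_mul_sum_sq (s := range r) (f := fun i => v (p+i+1) - v (p+i))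
      rw [htel2, card_range, neg_sq] at h
      exact_mod_cast h
    have hS_ge : (1/(p:ℝ) + 1/(r:ℝ)) * Y^2 ≤ S := by
      have a1 : Y^2 / (p:ℝ) ≤ ∑ i ∈ range p, (v (i+1) - v i)^2 := by
        rw [div_le_iff₀ hp0]
        linarith [hcs1]
      have a2 : Y^2 / (r:ℝ) ≤ ∑ i ∈ range r, (v (p+i+1) - v (p+i))^2 := by
        rw [div_le_iff₀ hr0]
        linarith [hcs2]
      calc (1/(p:ℝ) + 1/(r:ℝ)) * Y^2 = Y^2/(p:ℝ) + Y^2/(r:ℝ) := by ring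
        _ ≤ _ := by rw [hSsplit]; exact add_le_add a1 a2
    have hreal : -(1/(q:ℝ)) < 1/(p:ℝ) + 1/(r:ℝ) := by
      have h1 : ((p:ℝ)*(r:ℝ) + (q:ℝ)*((p:ℝ)+(r:ℝ))) < 0 := by exact_mod_cast hlt
      have hpne : (p:ℝ) ≠ 0 := ne_of_gt hp0
      have hrne : (r:ℝ) ≠ 0 := ne_of_gt hr0
      have hqne : (q:ℝ) ≠ 0 := ne_of_lt hqR
      have e : 1/(p:ℝ) + 1/(r:ℝ) + 1/(q:ℝ)
          = ((p:ℝ)*(r:ℝ) + (q:ℝ)*((p:ℝ)+(r:ℝ))) / ((p:ℝ)*(r:ℝ)*(q:ℝ)) := by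
        field_simp
        ring
      have hdneg : (p:ℝ)*(r:ℝ)*(q:ℝ) < 0 := mul_neg_of_pos_of_neg (mul_pos hp0 hr0) hqR
      have hpos : (0:ℝ) < 1/(p:ℝ) + 1/(r:ℝ) + 1/(q:ℝ) := by
        rw [e]
        exact div_pos_iff.mpr (Or.inr ⟨h1, hdneg⟩)
      linarith
    have hSnn : (0:ℝ) ≤ S := by
      rw [hS]
      exact Finset.sum_nonneg fun i _ => sq_nonneg _
    by_cases hzero : ∀ i, i < p+r-1 → y i = 0
    · have hYz : Y = 0 := by rw [hY]; exact hzero (p-1) (by omega)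
      have hTz : T ≠ 0 := by
        obtain ⟨i, hi⟩ := Function.ne_iff.mp hx
        by_cases him : (i:ℕ) = p+r-1
        · rw [hT, ← him, hyx i]
          exact hi
        · exfalso
          exact hi (by rw [← hyx i]; exact hzero ↑i (by omega))
      have hS0 : S = 0 := by
        rw [hS]
        apply Finset.sum_eq_zero
        intro i _
        have hv_all : ∀ j, v j = 0 := by
          intro j
          simp only [hv]
          split_ifs with h
          · exact hzero (j-1) (by omega)
          · rfl
        rw [hv_all, hv_all]
        simp
      rw [hS0, hYz]
      have hTT : 0 < T*T := mul_self_pos.mpr hTz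
      nlinarith
    · push_neg at hzero
      obtain ⟨i0, hi0, hy0⟩ := hzero
      have hSpos : 0 < S := by
        rcases lt_or_eq_of_le hSnn with h | h
        · exact h
        · exfalso
          have h0 : ∑ i ∈ range (p+r), (v (i+1) - v i)^2 = 0 := by rw [← hS]; exact h.symm
          have hterm := (Finset.sum_eq_zero_iff_of_nonneg
            (fun i (_ : i ∈ range (p+r)) => sq_nonneg (v (i+1) - v i))).mp h0
          have hdiff : ∀ i, i < p+r → v (i+1) = v i := by
            intro i hi
            have h2 := hterm i (mem_range.mpr hi)
            have h3 : v (i+1) - v i = 0 := sq_eq_zero_iff.mp h2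
            linarith
          have hvz : ∀ j, j ≤ p+r → v j = 0 := by
            intro j
            induction j with
            | zero => intro _; exact hv0
            | succ k ih =>
              intro hk
              rw [hdiff k (by omega)]
              exact ih (by omega)
          have : v (i0+1) = y i0 := by
            simp only [hv]
            rw [if_pos (by omega)]
            simp
          exact hy0 (by rw [← this]; exact hvz (i0+1) (by omega))
      have hkey : (q:ℝ)*(T*T) + 2*(Y*T) ≤ -(Y^2/(q:ℝ)) := by
        have h1 : (q:ℝ)*(T + Y/(q:ℝ))^2 ≤ 0 :=
          mul_nonpos_of_nonpos_of_nonneg (by linarith) (sq_nonneg _)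
        have h2 : (q:ℝ)*(T + Y/(q:ℝ))^2 = (q:ℝ)*(T*T) + 2*(Y*T) + Y^2/(q:ℝ) := by
          field_simp
          ring
        linarith
      by_cases hYz : Y = 0
      · have hY2 : Y^2/(q:ℝ) = 0 := by rw [hYz]; simp
        have : 2*(Y*T) = 0 := by rw [hYz]; ring
        linarith [hkey, hSpos]
      · have hY2 : 0 < Y^2 := by rw [sq]; exact mul_self_pos.mpr hYz
        have h3 : -(Y^2/(q:ℝ)) < (1/(p:ℝ)+1/(r:ℝ))*Y^2 := by
          have e : -(Y^2/(q:ℝ)) = (-(1/(q:ℝ)))*Y^2 := by ring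
          rw [e]
          exact mul_lt_mul_of_pos_right hreal hY2
        linarith [hkey, hS_ge, h3]
end

section
/- Let $p, r \ge 3$ and $q \le -3$ be integers with $-q = p\lambda^2 + r(\lambda+1)^2$ for some integer $\lambda$, and suppose $|p\lambda + r(\lambda+1)| \le p+r+1$. Then $\lambda = 0$ or $\lambda = -1$, i.e., $q = -r$ or $q = -p$. -/
theorem lambda_zero_or_neg_one (p r q lam : ℤ) (hp : 3 ≤ p) (hr : 3 ≤ r) (hq : q ≤ -3)
    (hrel : -q = p * lam ^ 2 + r * (lam + 1) ^ 2)
    (hbound : |p * lam + r * (lam + 1)| ≤ p + r + 1) :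
    (lam = 0 ∧ q = -r) ∨ (lam = -1 ∧ q = -p) := by
  obtain ⟨h1, h2⟩ := abs_le.mp hbound
  have hl : lam = 0 ∨ lam = -1 := by
    by_contra h
    push_neg at h
    obtain ⟨h0, hm1⟩ := h
    rcases le_or_gt 1 lam with hge | hlt
    · nlinarith
    · have hle : lam ≤ -2 := by omega
      nlinarith
  rcases hl with h | h <;> subst h
  · left; refine ⟨rfl, ?_⟩; norm_num at hrel; linarith
  · right; refine ⟨rfl, ?_⟩; norm_num at hrel; linarith
end

section
/- Let $p, r \ge 3$ and $q \le -3$ be integers with $p+r-1 \ge 5$. Suppose $\varphi : \mathbb{Z}^{p+r} \to \mathbb{Z}^{p+r}$ is a monomorphism satisfying $\varphi(f_i)\cdot\varphi(f_j) = G(f_i,f_j)$ where $G$ is the incidence matrix of the plumbing graph (path of $p+r-1$ vertices of weight $-2$ with one weight-$q$ vertex attached at position $p$), and the target carries the standard negative definite form. Then up to change of basis of the target, $\varphi(f_i) = e_i - e_{i+1}$ for $i = 1,\ldots,p+r-1$, and $\varphi(f_{p+r}) = \lambda(e_1+\cdots+e_p) + (\lambda+1)(e_{p+1}+\cdots+e_{p+r})$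 for some integer $\lambda$ with $q = -p\lambda^2 - r(\lambda+1)^2$. -/
lemma int_sq_one (x : ℤ) (h : x ^ 2 = 1) : x = 1 ∨ x = -1 := by
  have h2 : (x - 1) * (x + 1) = 0 := by linear_combination h
  rcases mul_eq_zero.mp h2 with h | h
  · left; omega
  · right; omega

variable {N : ℕ}

lemma tri_of_norm (c : Fin N → ℤ) (h : ∑ k, c k ^ 2 = 2) (x : Fin N) :
    c x = -1 ∨ c x = 0 ∨ c x = 1 := by
  have h1 : c x ^ 2 ≤ 2 := by
    calc c x ^ 2 ≤ ∑ k, c k ^ 2 :=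
      Finset.single_le_sum (fun i _ => sq_nonneg (c i)) (Finset.mem_univ x)
    _ = 2 := h
  have h2 : c x ≤ 1 := by nlinarith
  have h3 : -1 ≤ c x := by nlinarith
  omega

lemma norm_two_struct (c : Fin N → ℤ) (h : ∑ k, c k ^ 2 = 2) :
    ∃ x y : Fin N, x ≠ y ∧ c x ^ 2 = 1 ∧ c y ^ 2 = 1 ∧ ∀ z, z ≠ x → z ≠ y → c z = 0 := by
  have hind : ∀ k, c k ^ 2 = if c k ≠ 0 then 1 else 0 := by
    intro k
    rcases tri_of_norm c h k with h' | h' | h' <;> simp [h']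
  have hsum : ∑ k, c k ^ 2 = ((Finset.univ.filter (fun k => c k ≠ 0)).card : ℤ) := by
    rw [Finset.sum_congr rfl (fun k _ => hind k), Finset.sum_boole]
  have hcard : (Finset.univ.filter (fun k => c k ≠ 0)).card = 2 := by
    rw [h] at hsum; exact_mod_cast hsum.symm
  obtain ⟨x, y, hxy, hset⟩ := Finset.card_eq_two.mp hcard
  refine ⟨x, y, hxy, ?_, ?_, ?_⟩
  · have hx : x ∈ Finset.univ.filter (fun k => c k ≠ 0) := by rw [hset]; simp
    have := (Finset.mem_filter.mp hx).2
    rcases tri_of_norm c h x with h' | h' | h' <;> simp [h'] at this ⊢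
  · have hy : y ∈ Finset.univ.filter (fun k => c k ≠ 0) := by rw [hset]; simp
    have := (Finset.mem_filter.mp hy).2
    rcases tri_of_norm c h y with h' | h' | h' <;> simp [h'] at this ⊢
  · intro z hzx hzy
    by_contra hz
    have : z ∈ Finset.univ.filter (fun k => c k ≠ 0) := Finset.mem_filter.mpr ⟨Finset.mem_univ z, hz⟩
    rw [hset] at this
    simp [Finset.mem_insert, Finset.mem_singleton] at this
    tauto

lemma supp_of_norm (c : Fin N → ℤ) (h : ∑ k, c k ^ 2 = 2) (x y : Fin N) (hxy : x ≠ y)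
    (hx : c x ^ 2 = 1) (hy : c y ^ 2 = 1) : ∀ z, z ≠ x → z ≠ y → c z = 0 := by
  obtain ⟨x', y', hxy', hx', hy', hsupp⟩ := norm_two_struct c h
  have hxm : x = x' ∨ x = y' := by
    by_contra hc
    push_neg at hc
    have := hsupp x hc.1 hc.2
    rw [this] at hx; norm_num at hx
  have hym : y = x' ∨ y = y' := by
    by_contra hc
    push_neg at hc
    have := hsupp y hc.1 hc.2
    rw [this] at hy; norm_num at hy
  intro z hzx hzy
  rcases hxm with h1 | h1 <;> rcases hym with h2 | h2
  · exact absurd (h1.trans h2.symm) hxy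
  · exact hsupp z (h1 ▸ hzx) (h2 ▸ hzy)
  · exact hsupp z (h2 ▸ hzy) (h1 ▸ hzx)
  · exact absurd (h1.trans h2.symm) hxy

lemma dot_eval (w c : Fin N → ℤ) (x y : Fin N) (hxy : x ≠ y)
    (hsupp : ∀ z, z ≠ x → z ≠ y → w z = 0) :
    ∑ k, c k * w k = c x * w x + c y * w y := by
  refine Eq.trans ?_ (Finset.sum_pair (f := fun k => c k * w k) hxy)
  refine (Finset.sum_subset (Finset.subset_univ _) ?_).symm
  intro z _ hz
  simp only [Finset.mem_insert, Finset.mem_singleton, not_or] at hz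
  rw [hsupp z hz.1 hz.2, mul_zero]

lemma base_aux (V0 V1 : Fin N → ℤ) (hn1 : ∑ k, V1 k ^ 2 = 2)
    (x y : Fin N) (hxy : x ≠ y) (hx : V0 x ^ 2 = 1) (hy : V0 y ^ 2 = 1)
    (h1x : V1 x = 0) (h1y : V1 y = -V0 y) :
    ∃ (a : ℕ → Fin N) (ε : ℕ → ℤ),
      (∀ i j, i ≤ 2 → j ≤ 2 → a i = a j → i = j) ∧
      (∀ k, ε k = 1 ∨ ε k = -1) ∧
      V0 (a 0) = ε 0 ∧ V0 (a 1) = -ε 1 ∧ V1 (a 1) = ε 1 ∧ V1 (a 2) = -ε 2 := by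
  have hy1 : V1 y ^ 2 = 1 := by rw [h1y]; simpa using hy
  obtain ⟨x', y', hxy', hx', hy', hsupp1⟩ := norm_two_struct V1 hn1
  have hymem : y = x' ∨ y = y' := by
    by_contra hc
    push_neg at hc
    rw [hsupp1 y hc.1 hc.2] at hy1; norm_num at hy1
  obtain ⟨z, hzy, hz1⟩ : ∃ z, z ≠ y ∧ V1 z ^ 2 = 1 := by
    rcases hymem with h | h
    · subst h
      refine ⟨y', ?_, hy'⟩
      intro hc; exact hxy' hc.symm
    · subst h
      refine ⟨x', ?_, hx'⟩
      intro hc; exact hxy' hc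
  have hzx : z ≠ x := by
    intro hc; rw [hc, h1x] at hz1; norm_num at hz1
  refine ⟨fun k => if k = 0 then x else if k = 1 then y else z,
    fun k => if k = 0 then V0 x else if k = 1 then -V0 y else -V1 z, ?_, ?_, ?_, ?_, ?_, ?_⟩
  · intro i j hi hj hij
    interval_cases i <;> interval_cases j <;> simp_all
  · intro k
    rcases int_sq_one _ hx with h | h <;> rcases int_sq_one _ hy with h' | h' <;>
      rcases int_sq_one _ hz1 with h'' | h'' <;>
      by_cases hk0 : k = 0 <;> by_cases hk1 : k = 1 <;>
      simp [hk0, hk1, h, h', h'']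
  · simp
  · simp
  · simp [h1y]
  · norm_num

lemma chain_normalize (hN : 6 ≤ N) (V : ℕ → Fin N → ℤ)
    (hnorm : ∀ i, i < N - 1 → ∑ k, V i k ^ 2 = 2)
    (hadj : ∀ i, i + 1 < N - 1 → ∑ k, V (i + 1) k * V i k = -1)
    (hfar : ∀ i j, j + 2 ≤ i → i < N - 1 → ∑ k, V i k * V j k = 0) :
    ∀ m, 1 ≤ m → m ≤ N - 2 → ∃ (a : ℕ → Fin N) (ε : ℕ → ℤ),
      (∀ i j, i ≤ m + 1 → j ≤ m + 1 → a i = a j → i = j) ∧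
      (∀ k, ε k = 1 ∨ ε k = -1) ∧
      (∀ i, i ≤ m → V i (a i) = ε i ∧ V i (a (i + 1)) = -ε (i + 1)) := by
  intro m
  induction m with
  | zero => omega
  | succ j ih =>
    intro _ hm
    rcases Nat.eq_zero_or_pos j with hj0 | hj1
    · -- base case m = 1
      subst hj0
      obtain ⟨x, y, hxy, hx, hy, hsupp0⟩ := norm_two_struct (V 0) (hnorm 0 (by omega))
      have hdot10 : ∑ k, V 1 k * V 0 k = -1 := hadj 0 (by omega)
      rw [dot_eval (V 0) (V 1) x y hxy hsupp0] at hdot10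
      have hb1 := tri_of_norm (V 1) (hnorm 1 (by omega))
      have h0x := int_sq_one _ hx
      have h0y := int_sq_one _ hy
      have hcase : (V 1 x = 0 ∧ V 1 y = -V 0 y) ∨ (V 1 y = 0 ∧ V 1 x = -V 0 x) := by
        have h1x := hb1 x; have h1y := hb1 y
        rcases h0x with h | h <;> rcases h0y with h' | h' <;>
          rcases h1x with h'' | h'' | h'' <;> rcases h1y with h''' | h''' | h''' <;>
          rw [h, h', h'', h'''] at hdot10 ⊢ <;> (try norm_num at hdot10) <;> norm_num
      have hres : ∃ (a : ℕ → Fin N) (ε : ℕ → ℤ),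
          (∀ i j, i ≤ 2 → j ≤ 2 → a i = a j → i = j) ∧
          (∀ k, ε k = 1 ∨ ε k = -1) ∧
          V 0 (a 0) = ε 0 ∧ V 0 (a 1) = -ε 1 ∧ V 1 (a 1) = ε 1 ∧ V 1 (a 2) = -ε 2 := by
        rcases hcase with ⟨h1, h2⟩ | ⟨h1, h2⟩
        · exact base_aux (V 0) (V 1) (hnorm 1 (by omega)) x y hxy hx hy h1 h2
        · exact base_aux (V 0) (V 1) (hnorm 1 (by omega)) y x hxy.symm hy hx h1 h2
      obtain ⟨a, ε, hainj, hsgn, hA, hB, hC, hD⟩ := hres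
      refine ⟨a, ε, hainj, hsgn, ?_⟩
      intro i hi
      interval_cases i
      · exact ⟨hA, hB⟩
      · exact ⟨hC, hD⟩
    · -- inductive step, m = j + 1 with j ≥ 1
      obtain ⟨a, ε, hainj, hsgn, hch⟩ := ih hj1 (by omega)
      have hsgnsq : ∀ k, ε k ^ 2 = 1 := by
        intro k; rcases hsgn k with h | h <;> rw [h] <;> norm_num
      have hVsq : ∀ i, i ≤ j → V i (a i) ^ 2 = 1 ∧ V i (a (i + 1)) ^ 2 = 1 := by
        intro i hi
        obtain ⟨h1, h2⟩ := hch i hi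
        rw [h1, h2]
        exact ⟨hsgnsq i, by rw [neg_pow]; simp [hsgnsq (i + 1)]⟩
      have hne : ∀ i, i ≤ j → a i ≠ a (i + 1) := by
        intro i hi hc
        have := hainj i (i + 1) (by omega) (by omega) hc
        omega
      have hsupp : ∀ i, i ≤ j → ∀ z, z ≠ a i → z ≠ a (i + 1) → V i z = 0 := by
        intro i hi
        exact supp_of_norm (V i) (hnorm i (by omega)) (a i) (a (i + 1)) (hne i hi)
          (hVsq i hi).1 (hVsq i hi).2
      -- dot products of c := V (j+1) with earlier vectors
      have hd : ∀ i, i < j → V (j+1) (a i) * ε i = V (j+1) (a (i+1)) * ε (i+1) := by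
        intro i hi
        have h0 : ∑ k, V (j+1) k * V i k = 0 := hfar (j+1) i (by omega) (by omega)
        rw [dot_eval (V i) (V (j+1)) (a i) (a (i+1)) (hne i (by omega)) (hsupp i (by omega))]
          at h0
        rw [(hch i (by omega)).1, (hch i (by omega)).2] at h0
        linarith
      have hdj : V (j+1) (a j) * ε j - V (j+1) (a (j+1)) * ε (j+1) = -1 := by
        have h0 : ∑ k, V (j+1) k * V j k = -1 := hadj j (by omega)
        rw [dot_eval (V j) (V (j+1)) (a j) (a (j+1)) (hne j le_rfl) (hsupp j le_rfl)] at h0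
        rw [(hch j le_rfl).1, (hch j le_rfl).2] at h0
        linarith
      have hconst : ∀ i, i ≤ j → V (j+1) (a i) * ε i = V (j+1) (a j) * ε j := by
        have hstep : ∀ i, i ≤ j → V (j+1) (a i) * ε i = V (j+1) (a 0) * ε 0 := by
          intro i
          induction i with
          | zero => intro _; rfl
          | succ t iht =>
            intro ht
            rw [← hd t (by omega)]
            exact iht (by omega)
        intro i hi
        rw [hstep i hi, hstep j le_rfl]
      by_cases hcase : V (j+1) (a j) * ε j = 0
      · -- Case A : extend the chain with a fresh coordinate
        have hzero : ∀ i, i ≤ j → V (j+1) (a i) = 0 := by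
          intro i hi
          have h := hconst i hi
          rw [hcase] at h
          rcases hsgn i with h' | h' <;> rw [h'] at h <;> omega
        have hnext : V (j+1) (a (j+1)) = ε (j+1) := by
          have h := hdj
          rw [hcase] at h
          rcases hsgn (j+1) with h' | h' <;> rw [h'] at h ⊢ <;> omega
        have hnextsq : V (j+1) (a (j+1)) ^ 2 = 1 := by rw [hnext]; exact hsgnsq (j+1)
        obtain ⟨x', y', hxy', hx', hy', hsupp1⟩ :=
          norm_two_struct (V (j+1)) (hnorm (j+1) (by omega))
        have hmem : a (j+1) = x' ∨ a (j+1) = y' := by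
          by_contra hc
          push_neg at hc
          rw [hsupp1 _ hc.1 hc.2] at hnextsq; norm_num at hnextsq
        obtain ⟨z, hz1, hzne⟩ : ∃ z, V (j+1) z ^ 2 = 1 ∧ z ≠ a (j+1) := by
          rcases hmem with h | h
          · exact ⟨y', hy', fun hc => hxy' ((hc.trans h).symm)⟩
          · exact ⟨x', hx', fun hc => hxy' (hc.trans h)⟩
        have hznew : ∀ i, i ≤ j → z ≠ a i := by
          intro i hi hc
          rw [hc, hzero i hi] at hz1; norm_num at hz1
        refine ⟨Function.update a (j+2) z, Function.update ε (j+2) (-(V (j+1) z)),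
          ?_, ?_, ?_⟩
        · intro i i' hi hi' hii
          rcases Nat.lt_or_ge i (j+2) with h1 | h1 <;> rcases Nat.lt_or_ge i' (j+2) with h2 | h2
          · rw [Function.update_of_ne (by omega), Function.update_of_ne (by omega)] at hii
            exact hainj i i' (by omega) (by omega) hii
          · have hi2 : i' = j + 2 := by omega
            subst hi2
            rw [Function.update_of_ne (by omega), Function.update_self] at hii
            exfalso
            rcases Nat.lt_or_ge i (j+1) with h3 | h3
            · exact hznew i (by omega) hii.symm
            · have : i = j + 1 := by omega
              subst this
              exact hzne hii.symm
          · have hi2 : i = j + 2 := by omega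
            subst hi2
            rw [Function.update_self, Function.update_of_ne (by omega)] at hii
            exfalso
            rcases Nat.lt_or_ge i' (j+1) with h3 | h3
            · exact hznew i' (by omega) hii
            · have : i' = j + 1 := by omega
              subst this
              exact hzne hii
          · omega
        · intro k
          rcases eq_or_ne k (j+2) with h | h
          · subst h
            rw [Function.update_self]
            rcases int_sq_one _ hz1 with h' | h' <;> rw [h'] <;> simp
          · rw [Function.update_of_ne h]
            exact hsgn k
        · intro i hi
          rcases Nat.lt_or_ge i (j+1) with h1 | h1
          · rw [Function.update_of_ne (show i ≠ j+2 by omega),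
              Function.update_of_ne (show i+1 ≠ j+2 by omega),
              Function.update_of_ne (show i ≠ j+2 by omega),
              Function.update_of_ne (show i+1 ≠ j+2 by omega)]
            exact hch i (by omega)
          · have : i = j + 1 := by omega
            subst this
            rw [Function.update_of_ne (show j+1 ≠ j+2 by omega),
              Function.update_self, Function.update_self,
              Function.update_of_ne (show j+1 ≠ j+2 by omega)]
            exact ⟨hnext, by ring⟩
      · -- Case B : fold, leads to contradiction
        exfalso
        have hu : ∀ i, i ≤ j → V (j+1) (a i) ^ 2 = 1 := by
          intro i hi
          have h := hconst i hi
          have hne0 : V (j+1) (a i) ≠ 0 := by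
            intro h0
            rw [h0, zero_mul] at h
            exact hcase h.symm
          rcases tri_of_norm (V (j+1)) (hnorm (j+1) (by omega)) (a i) with hb | hb | hb
          · rw [hb]; norm_num
          · exact absurd hb hne0
          · rw [hb]; norm_num
        rcases Nat.lt_or_ge j 2 with hj2 | hj2
        · -- j = 1 : the fold configuration, killed by V 3
          have hj1' : j = 1 := by omega
          subst hj1'
          have ha01 : a 0 ≠ a 1 := fun hc => by
            have := hainj 0 1 (by omega) (by omega) hc; omega
          have hsupp2 : ∀ z, z ≠ a 0 → z ≠ a 1 → V 2 z = 0 := by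
            apply supp_of_norm (V 2) (hnorm 2 (by omega)) (a 0) (a 1) ha01
              (hu 0 (by omega)) (hu 1 (by omega))
          have h3 : V 2 (a 2) = 0 := by
            apply hsupp2
            · intro hc; have := hainj 2 0 (by omega) (by omega) hc; omega
            · intro hc; have := hainj 2 1 (by omega) (by omega) hc; omega
          have hD : V 2 (a 1) * ε 1 - V 2 (a 2) * ε 2 = -1 := hdj
          have hC0 : V 2 (a 0) * ε 0 = V 2 (a 1) * ε 1 := hconst 0 (by omega)
          rw [h3] at hD
          have hv1 : V 2 (a 1) * ε 1 = -1 := by linarith [hD]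
          have hv0 : V 2 (a 0) * ε 0 = -1 := by rw [hC0]; exact hv1
          have hw0 : V 2 (a 0) = -ε 0 := by
            linear_combination ε 0 * hv0 - V 2 (a 0) * hsgnsq 0
          have hw1 : V 2 (a 1) = -ε 1 := by
            linear_combination ε 1 * hv1 - V 2 (a 1) * hsgnsq 1
          have he0 : ∑ k, V 3 k * V 0 k = 0 := hfar 3 0 (by omega) (by omega)
          have he2 : ∑ k, V 3 k * V 2 k = -1 := hadj 2 (by omega)
          rw [dot_eval (V 0) (V 3) (a 0) (a 1) ha01 (hsupp 0 (by omega))] at he0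
          rw [dot_eval (V 2) (V 3) (a 0) (a 1) ha01 hsupp2] at he2
          have hc1 : V 0 (a 0) = ε 0 := (hch 0 (by omega)).1
          have hc2 : V 0 (a 1) = -ε 1 := (hch 0 (by omega)).2
          rw [hc1, hc2] at he0
          rw [hw0, hw1] at he2
          ring_nf at he0 he2
          omega
        · -- j ≥ 2 : three distinct coordinates with square one, contradiction
          have h0 : V (j+1) (a 2) = 0 := by
            apply supp_of_norm (V (j+1)) (hnorm (j+1) (by omega)) (a 0) (a 1)
              (fun hc => by have := hainj 0 1 (by omega) (by omega) hc; omega)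
              (hu 0 (by omega)) (hu 1 (by omega))
            · intro hc; have := hainj 2 0 (by omega) (by omega) hc; omega
            · intro hc; have := hainj 2 1 (by omega) (by omega) hc; omega
          have := hu 2 (by omega)
          rw [h0] at this; norm_num at this

lemma pp_entry (p r : ℕ) (q : ℤ) (i j : ℕ) (hi : i < p + r) (hj : j < p + r) :
    pretzelPlumbing p r q ⟨i, hi⟩ ⟨j, hj⟩ =
      if i = j then (if i = p + r - 1 then q else -2)
      else if i < p + r - 1 ∧ j < p + r - 1 ∧ ((i : ℤ) - (j : ℤ)).natAbs = 1 then 1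
      else if (i = p - 1 ∧ j = p + r - 1) ∨ (i = p + r - 1 ∧ j = p - 1)
        then 1 else 0 := by
  simp only [pretzelPlumbing, Matrix.of_apply, Fin.mk.injEq]

theorem rigidity_of_lattice_embedding (p r : ℕ) (q : ℤ)
    (hp : 3 ≤ p) (hr : 3 ≤ r) (hq : q ≤ -3) (h5 : 5 ≤ p + r - 1)
    (φ : (Fin (p + r) → ℤ) →ₗ[ℤ] (Fin (p + r) → ℤ))
    (hinj : Function.Injective φ)
    (hpair : ∀ i j : Fin (p + r),
      -(∑ k, φ (Pi.single i 1) k * φ (Pi.single j 1) k) = pretzelPlumbing p r q i j) :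
    ∃ (σ : Equiv.Perm (Fin (p + r))) (ε : Fin (p + r) → ℤ),
      (∀ k, ε k = 1 ∨ ε k = -1) ∧
      ∃ lam : ℤ, q = -(p : ℤ) * lam ^ 2 - (r : ℤ) * (lam + 1) ^ 2 ∧
        (∀ i : Fin (p + r), (i : ℕ) < p + r - 1 →
          (fun k => ε k * φ (Pi.single i 1) (σ k)) =
            fun k : Fin (p + r) =>
              if (k : ℕ) = (i : ℕ) then 1 else if (k : ℕ) = (i : ℕ) + 1 then -1 else 0) ∧
        ((fun k => ε k * φ (Pi.single (⟨p + r - 1, by omega⟩ : Fin (p + r)) 1) (σ k)) =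
          fun k : Fin (p + r) => if (k : ℕ) < p then lam else lam + 1) := by
  have hn6 : 6 ≤ p + r := by omega
  set V : ℕ → Fin (p + r) → ℤ :=
    fun i => if h : i < p + r then φ (Pi.single ⟨i, h⟩ 1) else 0 with hV
  have hVeq : ∀ (i : ℕ) (h : i < p + r), V i = φ (Pi.single ⟨i, h⟩ 1) := by
    intro i h; simp only [hV, dif_pos h]
  have key : ∀ (i j : ℕ) (hi : i < p + r) (hj : j < p + r),
      ∑ k, V i k * V j k = -(pretzelPlumbing p r q ⟨i, hi⟩ ⟨j, hj⟩) := by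
    intro i j hi hj
    have h := hpair ⟨i, hi⟩ ⟨j, hj⟩
    rw [hVeq i hi, hVeq j hj]
    linarith
  have hnorm : ∀ i, i < p + r - 1 → ∑ k, V i k ^ 2 = 2 := by
    intro i hi
    have h := key i i (by omega) (by omega)
    rw [pp_entry, if_pos rfl, if_neg (by omega)] at h
    simpa [pow_two] using h
  have hadj : ∀ i, i + 1 < p + r - 1 → ∑ k, V (i + 1) k * V i k = -1 := by
    intro i hi
    have h := key (i + 1) i (by omega) (by omega)
    rw [pp_entry, if_neg (by omega), if_pos ⟨by omega, by omega, by omega⟩] at h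
    simpa using h
  have hfar : ∀ i j, j + 2 ≤ i → i < p + r - 1 → ∑ k, V i k * V j k = 0 := by
    intro i j hij hi
    have h := key i j (by omega) (by omega)
    rw [pp_entry, if_neg (by omega), if_neg (by omega), if_neg (by omega)] at h
    simpa using h
  have hlast : ∀ i, i < p + r - 1 →
      ∑ k, V (p + r - 1) k * V i k = if i = p - 1 then -1 else 0 := by
    intro i hi
    have h := key (p + r - 1) i (by omega) (by omega)
    rw [pp_entry, if_neg (by omega), if_neg (by omega)] at h
    by_cases hip : i = p - 1
    · rw [if_pos hip]
      rw [if_pos (by omega)] at h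
      linarith
    · rw [if_neg hip]
      rw [if_neg (by omega)] at h
      linarith
  have hlastnorm : ∑ k, V (p + r - 1) k ^ 2 = -q := by
    have h := key (p + r - 1) (p + r - 1) (by omega) (by omega)
    rw [pp_entry, if_pos rfl, if_pos (by omega)] at h
    simpa [pow_two] using h
  obtain ⟨a, ε, hainj, hsgn, hch⟩ :=
    chain_normalize hn6 V hnorm hadj hfar (p + r - 2) (by omega) le_rfl
  have hsgnsq : ∀ k, ε k ^ 2 = 1 := by
    intro k; rcases hsgn k with h | h <;> rw [h] <;> norm_num
  have hne : ∀ i, i ≤ p + r - 2 → a i ≠ a (i + 1) := by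
    intro i hi hc
    have := hainj i (i + 1) (by omega) (by omega) hc
    omega
  have hVsq : ∀ i, i ≤ p + r - 2 → V i (a i) ^ 2 = 1 ∧ V i (a (i + 1)) ^ 2 = 1 := by
    intro i hi
    obtain ⟨h1, h2⟩ := hch i hi
    rw [h1, h2]
    exact ⟨hsgnsq i, by rw [neg_pow]; simp [hsgnsq (i + 1)]⟩
  have hsupp : ∀ i, i ≤ p + r - 2 → ∀ z, z ≠ a i → z ≠ a (i + 1) → V i z = 0 := by
    intro i hi
    exact supp_of_norm (V i) (hnorm i (by omega)) (a i) (a (i + 1)) (hne i hi)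
      (hVsq i hi).1 (hVsq i hi).2
  -- the coefficients of the last vector
  set d : ℕ → ℤ := fun k => V (p + r - 1) (a k) * ε k with hd
  have hd' : ∀ i, i < p + r - 1 → d i - d (i + 1) = if i = p - 1 then -1 else 0 := by
    intro i hi
    have h := hlast i hi
    rw [dot_eval (V i) (V (p + r - 1)) (a i) (a (i + 1)) (hne i (by omega))
      (hsupp i (by omega)), (hch i (by omega)).1, (hch i (by omega)).2] at h
    simp only [hd]
    split_ifs at h ⊢ <;> linarith
  have hstep0 : ∀ i, i < p + r - 1 → i ≠ p - 1 → d i = d (i + 1) := by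
    intro i h1 h2
    have := hd' i h1
    rw [if_neg h2] at this
    linarith
  set lam : ℤ := d (p - 1) with hlam
  have hjump : d p = lam + 1 := by
    have := hd' (p - 1) (by omega)
    rw [if_pos rfl] at this
    rw [show p - 1 + 1 = p by omega] at this
    rw [hlam]; linarith
  have hdown : ∀ t i, i + t = p - 1 → d i = lam := by
    intro t
    induction t with
    | zero => intro i hi; rw [hlam, show i = p - 1 by omega]
    | succ s ihs =>
      intro i hi
      rw [hstep0 i (by omega) (by omega)]
      exact ihs (i + 1) (by omega)
  have hup : ∀ t, p + t < p + r → d (p + t) = lam + 1 := by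
    intro t
    induction t with
    | zero => intro _; simpa using hjump
    | succ s ihs =>
      intro h
      rw [show p + (s + 1) = (p + s) + 1 by omega, ← hstep0 (p + s) (by omega) (by omega)]
      exact ihs (by omega)
  have hclaim : ∀ k, k < p + r → d k = if k < p then lam else lam + 1 := by
    intro k hk
    by_cases h : k < p
    · rw [if_pos h]; exact hdown (p - 1 - k) k (by omega)
    · rw [if_neg h, show k = p + (k - p) by omega]
      exact hup (k - p) (by omega)
  -- construct the permutation
  have hAinj : Function.Injective (fun k : Fin (p + r) => a (k : ℕ)) := by
    intro k l h
    exact Fin.ext (hainj _ _ (by omega) (by omega) h)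
  have hAbij := Finite.injective_iff_bijective.mp hAinj
  refine ⟨Equiv.ofBijective _ hAbij, fun k => ε (k : ℕ), fun k => hsgn _, lam, ?_, ?_, ?_⟩
  · -- the value of q
    have h1 : ∑ k : Fin (p + r), V (p + r - 1) (a (k : ℕ)) ^ 2
        = ∑ k, V (p + r - 1) k ^ 2 :=
      Equiv.sum_comp (Equiv.ofBijective _ hAbij) (fun k => V (p + r - 1) k ^ 2)
    have h2 : ∀ k : Fin (p + r), V (p + r - 1) (a (k : ℕ)) ^ 2
        = (if (k : ℕ) < p then lam else lam + 1) ^ 2 := by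
      intro k
      have h3 : V (p + r - 1) (a (k : ℕ)) ^ 2 = d (k : ℕ) ^ 2 := by
        rw [hd]
        simp only [mul_pow, hsgnsq, mul_one]
      rw [h3, hclaim (k : ℕ) k.isLt]
    rw [Finset.sum_congr rfl (fun k _ => h2 k), hlastnorm] at h1
    have h4 : ∑ k : Fin (p + r), (if (k : ℕ) < p then lam else lam + 1) ^ 2
        = p * lam ^ 2 + r * (lam + 1) ^ 2 := by
      have h5 : ∀ k : Fin (p + r), (if (k : ℕ) < p then lam else lam + 1) ^ 2
          = if (k : ℕ) < p then lam ^ 2 else (lam + 1) ^ 2 := by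
        intro k; split_ifs <;> rfl
      rw [Finset.sum_congr rfl (fun k _ => h5 k)]
      rw [Fin.sum_univ_eq_sum_range (fun i => if i < p then lam ^ 2 else (lam + 1) ^ 2)]
      rw [Finset.sum_ite, Finset.sum_const, Finset.sum_const]
      have hf1 : (Finset.range (p + r)).filter (fun i => i < p) = Finset.range p := by
        ext i
        simp only [Finset.mem_filter, Finset.mem_range]
        omega
      have hf2 : ((Finset.range (p + r)).filter (fun i => ¬ i < p)).card = r := by
        have h6 := Finset.card_filter_add_card_filter_not
          (s := Finset.range (p + r)) (p := fun i => i < p)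
        rw [hf1] at h6
        simp only [Finset.card_range] at h6
        omega
      rw [hf1, hf2, Finset.card_range]
      push_cast
      ring
    rw [h4] at h1
    linarith
  · -- the chain vectors
    intro i hi
    funext k
    have hφ : φ (Pi.single i 1) = V (i : ℕ) := by
      rw [hVeq (i : ℕ) i.isLt, Fin.eta]
    simp only [hφ, Equiv.ofBijective_apply]
    by_cases h1 : (k : ℕ) = (i : ℕ)
    · rw [if_pos h1, h1]
      rw [(hch (i : ℕ) (by omega)).1]
      rcases hsgn (i : ℕ) with h | h <;> rw [h] <;> norm_num
    · rw [if_neg h1]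
      by_cases h2 : (k : ℕ) = (i : ℕ) + 1
      · rw [if_pos h2, h2]
        rw [(hch (i : ℕ) (by omega)).2]
        rcases hsgn ((i : ℕ) + 1) with h | h <;> rw [h] <;> norm_num
      · rw [if_neg h2]
        rw [hsupp (i : ℕ) (by omega) (a (k : ℕ))
          (fun hc => h1 (hainj _ _ (by omega) (by omega) hc))
          (fun hc => h2 (hainj _ _ (by omega) (by omega) hc))]
        ring
  · -- the last vector
    funext k
    have hφ : φ (Pi.single (⟨p + r - 1, by omega⟩ : Fin (p + r)) 1) = V (p + r - 1) := by
      rw [hVeq (p + r - 1) (by omega)]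
    simp only [hφ, Equiv.ofBijective_apply]
    rw [← hclaim (k : ℕ) k.isLt, hd]
    ring
end
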